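/- Let K be a field and C a small K-linear category admitting a separability family. Then every left C-module is projective: every additive K-linear functor M : C ⥤ ModuleCat K is a projective object in the category of left C-modules (the full subcategory of the functor category C ⥤ ModuleCat K whose objects are the additive K-linear functors), i.e., for every epimorphism π : N → P and every morphism φ : M → P of left C-modules with π a componentwise surjection, there exists a morphism ψ : M → N of left C-modules with π ∘ ψ = φ. -/

import Mathlib

open CategoryTheory TensorProduct

/-- Composition as a `K`-linear map out of the tensor product of Hom spaces:
`h ⊗ k ↦ h ∘ k = k ≫ h`. -/
noncomputable def compMap (K : Type*) [Field K] {C : Type*} [Category C] [Preadditive C]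
    [Linear K C] (X Y Z : C) : ((Z ⟶ X) ⊗[K] (Y ⟶ Z)) →ₗ[K] (Y ⟶ X) :=
  TensorProduct.lift (LinearMap.mk₂ K (fun (h : Z ⟶ X) (k : Y ⟶ Z) => k ≫ h)
    (fun h h' k => by simp) (fun r h k => by simp)
    (fun h k k' => by simp) (fun r h k => by simp))

/-- A separability family for a `K`-linear category `C`. -/
structure SeparabilityFamily (K : Type*) [Field K] (C : Type*) [Category C] [Preadditive C]
    [Linear K C] where
  a : ∀ x y : C, (y ⟶ x) ⊗[K] (x ⟶ y)
  finite_support : ∀ x : C, {y : C | a x y ≠ 0}.Finite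
  sum_comp : ∀ x : C, (∑ᶠ y : C, compMap K x x y (a x y)) = 𝟙 x
  compat : ∀ {x z : C} (f : x ⟶ z) (y : C),
    LinearMap.rTensor (x ⟶ y) (Linear.rightComp K y f) (a x y)
      = LinearMap.lTensor (y ⟶ z) (Linear.leftComp K y f) (a z y)

/-- If `C` admits a separability family, then every left `C`-module is projective: any
morphism into the target of a componentwise-surjective morphism of left `C`-modules lifts. -/
theorem sepFamily_module_projective (K : Type*) [Field K]
    (C : Type*) [SmallCategory C] [Preadditive C] [Linear K C]
    (hsep : Nonempty (SeparabilityFamily K C))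
    (M : C ⥤ ModuleCat K) [M.Additive] [M.Linear K] :
    ∀ (N P : C ⥤ ModuleCat K) [N.Additive] [N.Linear K] [P.Additive] [P.Linear K]
      (π : N ⟶ P) (φ : M ⟶ P),
      (∀ x : C, Function.Surjective (π.app x)) →
      ∃ ψ : M ⟶ N, ψ ≫ π = φ := by
  obtain ⟨S⟩ := hsep
  intro N P _ _ _ _ π φ hπ
  -- choose linear sections of the components of π
  have hsec : ∀ y : C, ∃ s : P.obj y →ₗ[K] N.obj y,
      (π.app y).hom.comp s = LinearMap.id := fun y =>
    Module.projective_lifting_property _ LinearMap.id (hπ y)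
  choose s hs using hsec
  -- the naive (non-natural) lift at each object
  let σ : ∀ y : C, M.obj y ⟶ N.obj y := fun y => ModuleCat.ofHom ((s y).comp (φ.app y).hom)
  have hσ : ∀ y : C, σ y ≫ π.app y = φ.app y := by
    intro y
    ext m
    show (π.app y).hom ((s y) ((φ.app y).hom m)) = (φ.app y).hom m
    rw [← LinearMap.comp_apply, hs y, LinearMap.id_apply]
  -- the twisting map
  let T : ∀ x z y : C, ((y ⟶ z) ⊗[K] (x ⟶ y)) →ₗ[K] (M.obj x ⟶ N.obj z) := fun x z y =>
    TensorProduct.lift (LinearMap.mk₂ K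
      (fun (g : y ⟶ z) (h : x ⟶ y) => M.map h ≫ σ y ≫ N.map g)
      (fun g g' h => by simp)
      (fun r g h => by simp)
      (fun g h h' => by simp)
      (fun r g h => by simp))
  have hT : ∀ (x z y : C) (g : y ⟶ z) (h : x ⟶ y),
      T x z y (g ⊗ₜ[K] h) = M.map h ≫ σ y ≫ N.map g := fun _ _ _ _ _ => rfl
  -- Key identity 1: postcomposing with N.map f
  have L1 : ∀ (x z : C) (f : x ⟶ z) (y : C) (t : (y ⟶ x) ⊗[K] (x ⟶ y)),
      T x x y t ≫ N.map f = T x z y (LinearMap.rTensor (x ⟶ y) (Linear.rightComp K y f) t) := by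
    intro x z f y t
    induction t using TensorProduct.induction_on with
    | zero => simp
    | tmul g h => simp [hT, Linear.rightComp_apply]
    | add t₁ t₂ h₁ h₂ => simp [map_add, Preadditive.add_comp, h₁, h₂]
  -- Key identity 2: precomposing with M.map f
  have L2 : ∀ (x z : C) (f : x ⟶ z) (y : C) (t : (y ⟶ z) ⊗[K] (z ⟶ y)),
      M.map f ≫ T z z y t = T x z y (LinearMap.lTensor (y ⟶ z) (Linear.leftComp K y f) t) := by
    intro x z f y t
    induction t using TensorProduct.induction_on with
    | zero => simp
    | tmul g h => simp [hT, Linear.leftComp_apply]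
    | add t₁ t₂ h₁ h₂ => simp [map_add, Preadditive.comp_add, h₁, h₂]
  -- Key identity 3: composing with π
  have L3 : ∀ (x y : C) (t : (y ⟶ x) ⊗[K] (x ⟶ y)),
      T x x y t ≫ π.app x = φ.app x ≫ P.map (compMap K x x y t) := by
    intro x y t
    induction t using TensorProduct.induction_on with
    | zero => simp
    | tmul g h =>
      rw [hT]
      have hcomp : compMap K x x y (g ⊗ₜ[K] h) = h ≫ g := rfl
      rw [hcomp, Category.assoc, Category.assoc, π.naturality,
        ← Category.assoc (σ y) (π.app y) (P.map g), hσ,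
        ← Category.assoc (M.map h) (φ.app y) (P.map g), φ.naturality, P.map_comp,
        Category.assoc]
    | add t₁ t₂ h₁ h₂ => simp [map_add, Preadditive.add_comp, Preadditive.comp_add, h₁, h₂]
  -- support lemmas
  have hsupp : ∀ (x z : C) (b : ∀ y : C, (y ⟶ z) ⊗[K] (x ⟶ y)) (w : C) (hw : ∀ y, b y = 0 → S.a w y = 0),
      True := fun _ _ _ _ _ => trivial
  have hsuppT : ∀ (x z w : C) (b : ∀ y : C, (y ⟶ z) ⊗[K] (x ⟶ y)),
      (∀ y, S.a w y = 0 → b y = 0) →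
      (Function.support fun y => T x z y (b y)) ⊆ (S.finite_support w).toFinset := by
    intro x z w b hb y hy
    simp only [Set.Finite.coe_toFinset, Set.mem_setOf_eq]
    intro h0
    exact hy (show T x z y (b y) = 0 by rw [hb y h0]; exact map_zero _)
  -- the candidate lift
  let ψapp : ∀ x : C, M.obj x ⟶ N.obj x := fun x => ∑ᶠ y : C, T x x y (S.a x y)
  have hψapp : ∀ x : C, ψapp x = ∑ y ∈ (S.finite_support x).toFinset, T x x y (S.a x y) := by
    intro x
    exact finsum_eq_finset_sum_of_support_subset _
      (hsuppT x x x _ (fun y h => by rw [h]))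
  refine ⟨{ app := ψapp, naturality := ?_ }, ?_⟩
  · intro x z f
    -- both sides as sums over the union of the supports
    classical
    set u : Finset C := (S.finite_support x).toFinset ∪ (S.finite_support z).toFinset with hu
    have hxu : ψapp x = ∑ y ∈ u, T x x y (S.a x y) := by
      refine finsum_eq_sum_of_support_subset _ ?_
      refine subset_trans (hsuppT x x x _ (fun y h => by rw [h])) ?_
      intro y hy; exact Finset.mem_union_left _ hy
    have hzu : ψapp z = ∑ y ∈ u, T z z y (S.a z y) := by
      refine finsum_eq_sum_of_support_subset _ ?_
      refine subset_trans (hsuppT z z z _ (fun y h => by rw [h])) ?_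
      intro y hy; exact Finset.mem_union_right _ hy
    show M.map f ≫ ψapp z = ψapp x ≫ N.map f
    rw [hxu, hzu, Preadditive.comp_sum, Preadditive.sum_comp]
    refine Finset.sum_congr rfl fun y _ => ?_
    rw [L1, L2, S.compat f y]
  · ext x m
    show (π.app x) ((ψapp x) m) = (φ.app x) m
    have : ψapp x ≫ π.app x = φ.app x := by
      rw [hψapp, Preadditive.sum_comp]
      have h1 : ∀ y ∈ (S.finite_support x).toFinset,
          T x x y (S.a x y) ≫ π.app x = φ.app x ≫ P.map (compMap K x x y (S.a x y)) :=
        fun y _ => L3 x y (S.a x y)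
      rw [Finset.sum_congr rfl h1, ← Preadditive.comp_sum, ← P.map_sum]
      have h2 : ∑ y ∈ (S.finite_support x).toFinset, compMap K x x y (S.a x y) = 𝟙 x := by
        rw [← S.sum_comp x]
        refine (finsum_eq_finset_sum_of_support_subset _ ?_).symm
        intro y hy
        simp only [Set.Finite.coe_toFinset, Set.mem_setOf_eq]
        intro h0
        exact hy (show compMap K x x y (S.a x y) = 0 by rw [h0]; exact map_zero _)
      rw [h2, P.map_id, Category.comp_id]
    exact congrFun (congrArg (fun (g : M.obj x ⟶ P.obj x) => (g : M.obj x → P.obj x)) this) m
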